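/- Let F be a nonmeager semifilter. Then for every f in the increasing functions ℕ → ℕ, the set {g increasing : f ≤_F g} is nonmeager in the space of increasing functions. -/

import Mathlib

open Set Filter Cardinal

/-- A semifilter: a nonempty family of infinite subsets of ℕ closed under
almost-supersets. -/
def SemifilterOn (F : Set (Set ℕ)) : Prop :=
  F.Nonempty ∧ (∀ A ∈ F, A.Infinite) ∧
    ∀ A ∈ F, ∀ B : Set ℕ, (A \ B).Finite → B ∈ F

/-- `f ≤_F g` : the set where `f ≤ g` belongs to `F`. -/
def LeSF (F : Set (Set ℕ)) (f g : ℕ → ℕ) : Prop := {n | f n ≤ g n} ∈ F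

/-- `Y` is bounded with respect to `≤_F`. -/
def BoundedSF (F : Set (Set ℕ)) (Y : Set (ℕ → ℕ)) : Prop :=
  ∃ g : ℕ → ℕ, ∀ f ∈ Y, LeSF F f g

/-- `b(F)` : the minimal cardinality of a `≤_F`-unbounded family in `ℕ^ℕ`. -/
noncomputable def bSF (F : Set (Set ℕ)) : Cardinal :=
  sInf {c : Cardinal | ∃ Y : Set (ℕ → ℕ), #Y = c ∧ ¬ BoundedSF F Y}

/-- `f ≤* g` : eventual domination. -/
def EvLe (f g : ℕ → ℕ) : Prop := ∀ᶠ n in Filter.atTop, f n ≤ g n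

/-- `F` is nonmeager, viewed as a subset of `2^ℕ`. -/
def NonmeagerSF (F : Set (Set ℕ)) : Prop :=
  ¬ IsMeagre {x : ℕ → Bool | {n | x n = true} ∈ F}

/-- In a product of spaces indexed by ℕ, any neighborhood contains the set of points
agreeing on an initial segment. -/
lemma pi_nhds_initseg {α : ℕ → Type*} [∀ n, TopologicalSpace (α n)]
    {s : Set (∀ n, α n)} {a : ∀ n, α n} (h : s ∈ nhds a) :
    ∃ N : ℕ, ∀ y : ∀ n, α n, (∀ n < N, y n = a n) → y ∈ s := by
  rw [nhds_pi, Filter.mem_pi'] at h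
  obtain ⟨I, t, ht, hsub⟩ := h
  refine ⟨I.sup id + 1, fun y hy => hsub fun i hi => ?_⟩
  have : i < I.sup id + 1 := Nat.lt_succ_of_le (Finset.le_sup (f := id) hi)
  rw [hy i this]
  exact mem_of_mem_nhds (ht i)

abbrev XX := {g : ℕ → ℕ // StrictMono g}

def Cyl (g : ℕ → ℕ) (N : ℕ) : Set XX := {p | ∀ n < N, p.1 n = g n}

lemma isOpen_Cyl (g : ℕ → ℕ) (N : ℕ) : IsOpen (Cyl g N) := by
  have : Cyl g N = Subtype.val ⁻¹' (⋂ n ∈ Finset.range N, (fun h : ℕ → ℕ => h n) ⁻¹' {g n}) := by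
    ext p; simp [Cyl]
  rw [this]
  refine (isOpen_biInter_finset fun n _ => ?_).preimage continuous_subtype_val
  exact (isOpen_discrete _).preimage (continuous_apply n)

lemma ext_lemma {U : Set XX} (hU : IsOpen U) (hUd : Dense U) (g : XX) (N : ℕ) :
    ∃ p : XX × ℕ, N ≤ p.2 ∧ (∀ j < N, p.1.1 j = g.1 j) ∧ Cyl p.1.1 p.2 ⊆ U := by
  obtain ⟨h, hhU, hhC⟩ := hUd.exists_mem_open (isOpen_Cyl g.1 N) ⟨g, fun n _ => rfl⟩
  -- openness of U at h
  obtain ⟨V, hV, rfl⟩ := isOpen_induced_iff.mp hU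
  obtain ⟨N₂, hN₂⟩ := pi_nhds_initseg (s := V) (a := h.1) (hV.mem_nhds hhU)
  refine ⟨(h, max N N₂), le_max_left _ _, fun j hj => hhC j hj, fun p hp => ?_⟩
  exact hN₂ p.1 fun n hn => hp n (lt_of_lt_of_le hn (le_max_right _ _))

/-- Extension of `g` beyond `N` dominating `f`. -/
def domExt (f g : ℕ → ℕ) (N : ℕ) : ℕ → ℕ :=
  fun j => if j < N then g j else f j + g (N - 1) + 1

lemma domExt_sm {f g : ℕ → ℕ} (hf : StrictMono f) (hg : StrictMono g) (N : ℕ) :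
    StrictMono (domExt f g N) := by
  intro i j hij
  unfold domExt
  by_cases hi : i < N <;> by_cases hj : j < N
  · simpa [hi, hj] using hg hij
  · have h1 : g i ≤ g (N - 1) := hg.monotone (by omega)
    simp only [if_pos hi, if_neg hj]; omega
  · omega
  · simp only [if_neg hi, if_neg hj]
    have := hf hij; omega

lemma domExt_agree (f g : ℕ → ℕ) (N : ℕ) : ∀ j < N, domExt f g N j = g j :=
  fun j hj => if_pos hj

lemma domExt_dom (f g : ℕ → ℕ) (N : ℕ) : ∀ j, N ≤ j → f j ≤ domExt f g N j := by
  intro j hj; unfold domExt; rw [if_neg (by omega)]; omega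

section Construction
variable (f : ℕ → ℕ) (hf : StrictMono f) (U : ℕ → Set XX)
  (hU : ∀ m, IsOpen (U m)) (hUd : ∀ m, Dense (U m))

noncomputable def pickX (m : ℕ) (g : XX) (N : ℕ) : XX × ℕ :=
  (ext_lemma (hU m) (hUd m) g N).choose

lemma pickX_spec (m : ℕ) (g : XX) (N : ℕ) :
    N ≤ (pickX U hU hUd m g N).2 ∧
    (∀ j < N, (pickX U hU hUd m g N).1.1 j = g.1 j) ∧
    Cyl (pickX U hU hUd m g N).1.1 (pickX U hU hUd m g N).2 ⊆ U m :=
  (ext_lemma (hU m) (hUd m) g N).choose_spec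

noncomputable def stage : ℕ → ℕ × ((ℕ → Bool) → XX)
  | 0 => (0, fun _ => ⟨f, hf⟩)
  | (k+1) =>
    let n := (stage k).1
    let T := (stage k).2
    let P : (ℕ → Bool) → XX × ℕ := fun x =>
      pickX U hU hUd (Nat.count (fun j => x j = true) k) (T x) n
    (max (n+1) (Finset.univ.sup fun s : Fin (k+1) → Bool =>
        (P (fun i => if h : i < k+1 then s ⟨i, h⟩ else false)).2),
     fun x => if x k = true then (P x).1
       else ⟨domExt f (T x).1 n, domExt_sm hf (T x).2 n⟩)

/-- abbreviation for the pick made at stage k -/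
noncomputable def Pk (k : ℕ) (x : ℕ → Bool) : XX × ℕ :=
  pickX U hU hUd (Nat.count (fun j => x j = true) k)
    ((stage f hf U hU hUd k).2 x) (stage f hf U hU hUd k).1

lemma stage_succ_fst (k : ℕ) :
    (stage f hf U hU hUd (k+1)).1 =
      max ((stage f hf U hU hUd k).1 + 1)
        (Finset.univ.sup fun s : Fin (k+1) → Bool =>
          (Pk f hf U hU hUd k (fun i => if h : i < k+1 then s ⟨i, h⟩ else false)).2) := rfl

lemma stage_succ_snd (k : ℕ) (x : ℕ → Bool) :
    (stage f hf U hU hUd (k+1)).2 x =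
      if x k = true then (Pk f hf U hU hUd k x).1
      else ⟨domExt f ((stage f hf U hU hUd k).2 x).1 (stage f hf U hU hUd k).1,
        domExt_sm hf ((stage f hf U hU hUd k).2 x).2 _⟩ := rfl

lemma nn_lt (k : ℕ) : (stage f hf U hU hUd k).1 < (stage f hf U hU hUd (k+1)).1 := by
  rw [stage_succ_fst]; exact lt_of_lt_of_le (Nat.lt_succ_self _) (le_max_left _ _)

lemma nn_mono : StrictMono (fun k => (stage f hf U hU hUd k).1) :=
  strictMono_nat_of_lt_succ (nn_lt f hf U hU hUd)

lemma le_nn (k : ℕ) : k ≤ (stage f hf U hU hUd k).1 := by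
  induction k with
  | zero => exact Nat.zero_le _
  | succ k ih => exact Nat.lt_of_le_of_lt ih (nn_lt f hf U hU hUd k)

lemma count_congr {x y : ℕ → Bool} (k : ℕ) (h : ∀ i < k, x i = y i) :
    Nat.count (fun j => x j = true) k = Nat.count (fun j => y j = true) k := by
  rw [Nat.count_eq_card_filter_range, Nat.count_eq_card_filter_range]
  congr 1
  apply Finset.filter_congr
  intro j hj
  simp [h j (Finset.mem_range.mp hj)]

lemma stage_congr (k : ℕ) {x y : ℕ → Bool} (h : ∀ i < k, x i = y i) :
    (stage f hf U hU hUd k).2 x = (stage f hf U hU hUd k).2 y := by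
  induction k with
  | zero => rfl
  | succ k ih =>
    have hxy : ∀ i < k, x i = y i := fun i hi => h i (Nat.lt_succ_of_lt hi)
    have hT := ih hxy
    have hc := count_congr (x := x) (y := y) k hxy
    rw [stage_succ_snd, stage_succ_snd, h k (Nat.lt_succ_self k)]
    by_cases hyk : y k = true
    · simp only [if_pos hyk]
      unfold Pk
      rw [hT, hc]
    · simp only [if_neg hyk]
      apply Subtype.ext
      simp only
      rw [hT]

lemma Pk_congr (k : ℕ) {x y : ℕ → Bool} (h : ∀ i < k, x i = y i) :
    Pk f hf U hU hUd k x = Pk f hf U hU hUd k y := by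
  unfold Pk
  rw [stage_congr f hf U hU hUd k h, count_congr k h]

lemma Pk_le (k : ℕ) (x : ℕ → Bool) :
    (Pk f hf U hU hUd k x).2 ≤ (stage f hf U hU hUd (k+1)).1 := by
  rw [stage_succ_fst]
  refine le_trans ?_ (le_max_right _ _)
  have := Finset.le_sup (f := fun s : Fin (k+1) → Bool =>
      (Pk f hf U hU hUd k (fun i => if h : i < k+1 then s ⟨i, h⟩ else false)).2)
    (Finset.mem_univ (fun i : Fin (k+1) => x i))
  refine le_trans (le_of_eq ?_) this
  congr 1
  apply Pk_congr
  intro i hi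
  simp [Nat.lt_succ_of_lt hi]

lemma agree_succ (k : ℕ) (x : ℕ → Bool) :
    ∀ j < (stage f hf U hU hUd k).1,
      ((stage f hf U hU hUd (k+1)).2 x).1 j = ((stage f hf U hU hUd k).2 x).1 j := by
  intro j hj
  rw [stage_succ_snd]
  by_cases hxk : x k = true
  · simp only [hxk, if_pos]
    exact (pickX_spec U hU hUd _ _ _).2.1 j hj
  · rw [if_neg hxk]
    exact domExt_agree _ _ _ j hj

lemma agree (k k' : ℕ) (hk : k ≤ k') (x : ℕ → Bool) :
    ∀ j < (stage f hf U hU hUd k).1,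
      ((stage f hf U hU hUd k').2 x).1 j = ((stage f hf U hU hUd k).2 x).1 j := by
  induction k', hk using Nat.le_induction with
  | base => intro j hj; rfl
  | succ k' hkk' ih =>
    intro j hj
    have hjk' : j < (stage f hf U hU hUd k').1 :=
      lt_of_lt_of_le hj ((nn_mono f hf U hU hUd).monotone hkk')
    rw [agree_succ f hf U hU hUd k' x j hjk', ih j hj]

end Construction

section Glim
variable (f : ℕ → ℕ) (hf : StrictMono f) (U : ℕ → Set XX)
  (hU : ∀ m, IsOpen (U m)) (hUd : ∀ m, Dense (U m))

noncomputable def glim (x : ℕ → Bool) : ℕ → ℕ :=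
  fun j => ((stage f hf U hU hUd (j+1)).2 x).1 j

lemma glim_eq (x : ℕ → Bool) (k j : ℕ) (hj : j < (stage f hf U hU hUd k).1) :
    glim f hf U hU hUd x j = ((stage f hf U hU hUd k).2 x).1 j := by
  unfold glim
  rcases Nat.le_total (j+1) k with h | h
  · exact agree f hf U hU hUd (j+1) k h x j
      (lt_of_lt_of_le (Nat.lt_succ_self j) (le_trans (le_nn f hf U hU hUd (j+1))
        (le_refl _))) |>.symm ▸ (agree f hf U hU hUd (j+1) k h x j
          (lt_of_lt_of_le (Nat.lt_succ_self j) (le_nn f hf U hU hUd (j+1))))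
  · exact agree f hf U hU hUd k (j+1) h x j hj

lemma glim_sm (x : ℕ → Bool) : StrictMono (glim f hf U hU hUd x) := by
  intro i j hij
  have hjn : j < (stage f hf U hU hUd (j+1)).1 :=
    lt_of_lt_of_le (Nat.lt_succ_self j) (le_nn f hf U hU hUd (j+1))
  have hin : i < (stage f hf U hU hUd (j+1)).1 := lt_trans hij hjn
  rw [glim_eq f hf U hU hUd x (j+1) i hin, glim_eq f hf U hU hUd x (j+1) j hjn]
  exact ((stage f hf U hU hUd (j+1)).2 x).2 hij

lemma glim_dom (x : ℕ → Bool) (k : ℕ) (hxk : x k = false) :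
    ∀ j, (stage f hf U hU hUd k).1 ≤ j → j < (stage f hf U hU hUd (k+1)).1 →
      f j ≤ glim f hf U hU hUd x j := by
  intro j hj1 hj2
  rw [glim_eq f hf U hU hUd x (k+1) j hj2, stage_succ_snd]
  rw [if_neg (by simp [hxk])]
  exact domExt_dom _ _ _ j hj1

lemma glim_mem (x : ℕ → Bool) (k : ℕ) (hxk : x k = true) :
    (⟨glim f hf U hU hUd x, glim_sm f hf U hU hUd x⟩ : XX) ∈
      U (Nat.count (fun j => x j = true) k) := by
  have hspec := pickX_spec U hU hUd (Nat.count (fun j => x j = true) k)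
    ((stage f hf U hU hUd k).2 x) (stage f hf U hU hUd k).1
  apply hspec.2.2
  intro j hj
  have hle : (Pk f hf U hU hUd k x).2 ≤ (stage f hf U hU hUd (k+1)).1 :=
    Pk_le f hf U hU hUd k x
  have hj2 : j < (stage f hf U hU hUd (k+1)).1 := lt_of_lt_of_le hj hle
  show glim f hf U hU hUd x j = _
  rw [glim_eq f hf U hU hUd x (k+1) j hj2, stage_succ_snd, if_pos hxk]
  rfl

end Glim

lemma exists_block (n : ℕ → ℕ) (h0 : n 0 = 0) (hn : ∀ k, k ≤ n k) (hmono : Monotone n)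
    (j : ℕ) : ∃ k, n k ≤ j ∧ j < n (k + 1) := by
  classical
  set P : ℕ → Prop := fun k => n k ≤ j with hP
  have hspec : P (Nat.findGreatest P (j + 1)) :=
    Nat.findGreatest_spec (m := 0) (Nat.zero_le _) (show P 0 by simp [hP, h0])
  refine ⟨Nat.findGreatest P (j + 1), hspec, ?_⟩
  by_cases h : Nat.findGreatest P (j + 1) + 1 ≤ j + 1
  · have := Nat.findGreatest_is_greatest (Nat.lt_succ_self _) h
    simpa [hP] using this
  · have : j < Nat.findGreatest P (j+1) + 1 := by omega
    exact lt_of_lt_of_le this (hn _)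

lemma talagrand (F : Set (Set ℕ))
    (hnm : ¬ IsMeagre {x : ℕ → Bool | {n | x n = true} ∈ F})
    (n : ℕ → ℕ) (hn : ∀ k, k ≤ n k) :
    ∃ A ∈ F, {k | ∀ j, n k ≤ j → j < n (k + 1) → j ∉ A}.Infinite := by
  by_contra hcon
  push_neg at hcon
  apply hnm
  set C : ℕ → Set (ℕ → Bool) :=
    fun m => {x | ∀ k, m ≤ k → ∃ j, n k ≤ j ∧ j < n (k + 1) ∧ x j = true} with hC
  have hsub : {x : ℕ → Bool | {n | x n = true} ∈ F} ⊆ ⋃ m, C m := by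
    intro x hx
    have hA := hcon _ hx
    obtain ⟨m0, hm0⟩ := hA.bddAbove
    refine Set.mem_iUnion.mpr ⟨m0 + 1, fun k hk => ?_⟩
    have hkE : ¬ (∀ j, n k ≤ j → j < n (k + 1) → j ∉ {n | x n = true}) := by
      intro hkmem
      have : k ∈ {k | ∀ j, n k ≤ j → j < n (k + 1) → j ∉ {n | x n = true}} := hkmem
      exact absurd (hm0 this) (by omega)
    push_neg at hkE
    obtain ⟨j, hj1, hj2, hj3⟩ := hkE
    exact ⟨j, hj1, hj2, hj3⟩
  have hclosed : ∀ m, IsClosed (C m) := by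
    intro m
    have : C m = ⋂ k, {x : ℕ → Bool | m ≤ k → ∃ j, n k ≤ j ∧ j < n (k + 1) ∧ x j = true} := by
      ext x; simp [hC]
    rw [this]
    refine isClosed_iInter fun k => ?_
    by_cases hmk : m ≤ k
    · have : {x : ℕ → Bool | m ≤ k → ∃ j, n k ≤ j ∧ j < n (k + 1) ∧ x j = true} =
          ⋃ j ∈ Finset.Ico (n k) (n (k + 1)), {x : ℕ → Bool | x j = true} := by
        ext x
        simp only [Set.mem_setOf_eq, Set.mem_iUnion, Finset.mem_Ico]
        constructor
        · rintro h; obtain ⟨j, h1, h2, h3⟩ := h hmk; exact ⟨j, ⟨h1, h2⟩, h3⟩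
        · rintro ⟨j, ⟨h1, h2⟩, h3⟩ _; exact ⟨j, h1, h2, h3⟩
      rw [this]
      refine Set.Finite.isClosed_biUnion (Finset.finite_toSet _) fun j _ => ?_
      show IsClosed ((fun x : ℕ → Bool => x j) ⁻¹' {true})
      exact IsClosed.preimage (continuous_apply j) (isClosed_discrete ({true} : Set Bool))
    · have : {x : ℕ → Bool | m ≤ k → ∃ j, n k ≤ j ∧ j < n (k + 1) ∧ x j = true} =
          Set.univ := by
        ext x; simp [hmk]
      rw [this]; exact isClosed_univ
  have hint : ∀ m, interior (C m) = ∅ := by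
    intro m
    rw [Set.eq_empty_iff_forall_notMem]
    intro x hx
    have hnb : C m ∈ nhds x := mem_interior_iff_mem_nhds.mp hx
    obtain ⟨N, hN⟩ := pi_nhds_initseg hnb
    set k := max m N with hk
    set y : ℕ → Bool := fun i => if i < N then x i else false with hy
    have hyC : y ∈ C m := hN y (fun i hi => by simp [hy, hi])
    obtain ⟨j, hj1, hj2, hj3⟩ := hyC k (le_max_left _ _)
    have hjN : N ≤ j := le_trans (le_trans (le_max_right m N) (hn k)) hj1
    simp [hy, Nat.not_lt.mpr hjN] at hj3
  refine IsMeagre.mono hsub (isMeagre_iUnion fun m => ?_)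
  show (C m)ᶜ ∈ residual _
  have hcd := isClosed_isNowhereDense_iff_compl.mp
    ⟨hclosed m, (IsClosed.isNowhereDense_iff (hclosed m)).mpr (hint m)⟩
  exact residual_of_dense_open hcd.1 hcd.2

theorem stmt13_aux (F : Set (Set ℕ)) (hF : SemifilterOn F)
    (hnm : NonmeagerSF F) (f : ℕ → ℕ) (hf : StrictMono f) :
    ¬ IsMeagre {g : {g : ℕ → ℕ // StrictMono g} | LeSF F f g.val} := by
  classical
  intro hm
  obtain ⟨S, hSo, hSd, hSc, hSsub⟩ := mem_residual_iff.mp hm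
  obtain ⟨u, hu⟩ := (hSc.insert Set.univ).exists_eq_range ⟨Set.univ, Set.mem_insert _ _⟩
  have hUo : ∀ m, IsOpen (u m) := by
    intro m
    have : u m ∈ insert Set.univ S := hu ▸ Set.mem_range_self m
    rcases this with h | h
    · rw [h]; exact isOpen_univ
    · exact hSo _ h
  have hUd : ∀ m, Dense (u m) := by
    intro m
    have : u m ∈ insert Set.univ S := hu ▸ Set.mem_range_self m
    rcases this with h | h
    · rw [h]; exact dense_univ
    · exact hSd _ h
  -- the block endpoints
  set nn : ℕ → ℕ := fun k => (stage f hf u hUo hUd k).1 with hnn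
  have hn0 : nn 0 = 0 := rfl
  have hnle : ∀ k, k ≤ nn k := le_nn f hf u hUo hUd
  -- Talagrand
  obtain ⟨A, hA, hE⟩ := talagrand F hnm nn hnle
  set E := {k | ∀ j, nn k ≤ j → j < nn (k + 1) → j ∉ A} with hEdef
  set x : ℕ → Bool := fun k => decide (k ∈ E) with hx
  have hxE : ∀ k, x k = true ↔ k ∈ E := by intro k; simp [hx]
  have hxinf : {j | x j = true}.Infinite := by
    have : {j | x j = true} = E := by ext k; simp [hxE]
    rw [this]; exact hE
  set g : ℕ → ℕ := glim f hf u hUo hUd x with hg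
  set gX : XX := ⟨g, glim_sm f hf u hUo hUd x⟩ with hgX
  -- gX is in every u m
  have hmem : ∀ m, gX ∈ u m := by
    intro m
    set p : ℕ → Prop := fun j => x j = true with hp
    have h1 : p (Nat.nth p m) := Nat.nth_mem_of_infinite hxinf m
    have h2 : Nat.count p (Nat.nth p m) = m := Nat.count_nth_of_infinite hxinf m
    have := glim_mem f hf u hUo hUd x (Nat.nth p m) h1
    rwa [h2] at this
  -- hence gX avoids the meagre set
  have hnotin : gX ∉ {g : XX | LeSF F f g.val} := by
    have : gX ∈ ⋂₀ S := by
      intro t ht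
      have : t ∈ insert Set.univ S := Set.mem_insert_of_mem _ ht
      rw [hu] at this
      obtain ⟨m, rfl⟩ := this
      exact hmem m
    exact hSsub this
  -- but A forces f ≤ g on A
  have hAsub : A ⊆ {n | f n ≤ g n} := by
    intro j hj
    obtain ⟨k, hk1, hk2⟩ := exists_block nn hn0 hnle (nn_mono f hf u hUo hUd).monotone j
    have hkE : k ∉ E := by
      intro hkmem
      exact hkmem j hk1 hk2 hj
    have hxk : x k = false := by
      rw [← Bool.not_eq_true]
      intro h
      exact hkE ((hxE k).mp h)
    exact glim_dom f hf u hUo hUd x k hxk j hk1 hk2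
  have : {n | f n ≤ g n} ∈ F := hF.2.2 A hA _ (by rw [Set.diff_eq_empty.mpr hAsub]; exact Set.finite_empty)
  exact hnotin this

/-- for a nonmeager semifilter `F` and any increasing `f`, the
set of increasing `g` with `f ≤_F g` is nonmeager in the space of increasing
functions. -/
theorem stmt_13 (F : Set (Set ℕ)) (hF : SemifilterOn F)
    (hnm : NonmeagerSF F) (f : ℕ → ℕ) (hf : StrictMono f) :
    ¬ IsMeagre {g : {g : ℕ → ℕ // StrictMono g} | LeSF F f g.val} := by
  exact stmt13_aux F hF hnm f hf
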